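/- There exists a unique 2×2 matrix R(λ) with entries in 𝒜[[λ^{-1}]] such that: (i) Λ(R(λ))·U(λ) − U(λ)·R(λ) = 0 (an identity of matrices with entries in 𝒜[[λ^{-1}]][λ]); (ii) R(λ) − ((1, 0), (q_{n−1}, 0)) ∈ λ^{-1}·Mat(2, 𝒜[[λ^{-1}]]); (iii) tr R(λ) = 1; (iv) det R(λ) = 0. (This R(λ) is denoted R_+(λ) and called the basic matrix resolvent at λ = ∞.) -/

import Mathlib

noncomputable section

open PowerSeries

open scoped Classical

/-- The polynomial ring `𝒜 = ℚ[q_{n+i}, r_{n+i} : i ∈ ℤ]`; the variable `(true, i)`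
is `q_{n+i}` and `(false, i)` is `r_{n+i}`. -/
abbrev A : Type := MvPolynomial (Bool × ℤ) ℚ

/-- The generator `q_{n+i}`. -/
def qv (i : ℤ) : A := MvPolynomial.X (true, i)

/-- The generator `r_{n+i}`. -/
def rv (i : ℤ) : A := MvPolynomial.X (false, i)

/-- The shift operator `Λ`, determined by `Λ(q_{n+i}) = q_{n+i+1}`, `Λ(r_{n+i}) = r_{n+i+1}`. -/
def Lam : A →+* A :=
  (MvPolynomial.rename (fun bi : Bool × ℤ => (bi.1, bi.2 + 1))).toRingHom

/-- Formal power series over `𝒜` (in `λ`, or in `λ⁻¹`, depending on the context). -/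
abbrev S : Type := PowerSeries A

/-- 2×2 matrices over `𝒜[[λ]]` (resp. `𝒜[[λ⁻¹]]`). -/
abbrev M2 : Type := Matrix (Fin 2) (Fin 2) S

/-- `Λ` acting coefficientwise on formal power series. -/
def LamS : S →+* S := PowerSeries.map Lam

/-- The Lax matrix `U(λ) = ((λ, r_n), (λ q_n, 1))`, as a matrix over `𝒜[[λ]]`. -/
def Umat : M2 :=
  !![PowerSeries.X, PowerSeries.C (R := A) (rv 0);
     PowerSeries.X * PowerSeries.C (R := A) (qv 0), 1]

/-- The Lax matrix multiplied by `λ⁻¹`, i.e. `λ⁻¹·U(λ) = ((1, λ⁻¹ r_n), (q_n, λ⁻¹))`,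
as a matrix over `𝒜[[λ⁻¹]]` (here `PowerSeries.X` stands for `λ⁻¹`). -/
def UmatInf : M2 :=
  !![1, PowerSeries.X * PowerSeries.C (R := A) (rv 0);
     PowerSeries.C (R := A) (qv 0), PowerSeries.X]

/-- `R` is the basic matrix resolvent at `λ = 0`: it is a matrix resolvent
(`Λ(R(λ))·U(λ) = U(λ)·R(λ)`), `R ≡ ((0, r_{n-1}), (0, 1)) mod λ`, `tr R = 1`, `det R = 0`. -/
def IsResMinus (R : M2) : Prop :=
  R.map (⇑LamS) * Umat = Umat * R ∧
  R.map (⇑(PowerSeries.constantCoeff (R := A))) = !![0, rv (-1); 0, 1] ∧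
  R 0 0 + R 1 1 = 1 ∧
  R 0 0 * R 1 1 - R 0 1 * R 1 0 = 0

/-- `R` is the basic matrix resolvent at `λ = ∞`: it is a matrix resolvent
(the equation `Λ(R(λ))·U(λ) = U(λ)·R(λ)` is multiplied by `λ⁻¹`, so that it takes place
in matrices over `𝒜[[λ⁻¹]]`), `R ≡ ((1, 0), (q_{n-1}, 0)) mod λ⁻¹`, `tr R = 1`, `det R = 0`. -/
def IsResPlus (R : M2) : Prop :=
  R.map (⇑LamS) * UmatInf = UmatInf * R ∧
  R.map (⇑(PowerSeries.constantCoeff (R := A))) = !![1, 0; qv (-1), 0] ∧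
  R 0 0 + R 1 1 = 1 ∧
  R 0 0 * R 1 1 - R 0 1 * R 1 0 = 0

/-- The `p`-th coefficient matrix of a matrix of power series. -/
def coefM (R : M2) (p : ℕ) : Matrix (Fin 2) (Fin 2) A :=
  Matrix.of fun i j => PowerSeries.coeff (R := A) p (R i j)

/-- The coefficients `a_{α,p}` (with `α = + ↔ true`, `α = - ↔ false`). -/
def aC (Rm Rp : M2) (α : Bool) (p : ℕ) : A :=
  if α then coefM Rp p 0 0 - (if p = 0 then 1 else 0) else coefM Rm p 0 0

/-- The coefficients `b_{α,p}`. -/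
def bC (Rm Rp : M2) (α : Bool) (p : ℕ) : A :=
  if α then coefM Rp p 0 1 else coefM Rm p 0 1

/-- The coefficients `c_{α,p}`. -/
def cC (Rm Rp : M2) (α : Bool) (p : ℕ) : A :=
  if α then coefM Rp p 1 0 else coefM Rm p 1 0

/-- `U(λ) = U0 + λ·U1`: constant part. -/
def U0 : Matrix (Fin 2) (Fin 2) A := !![0, rv 0; 0, 1]

/-- `U(λ) = U0 + λ·U1`: linear part. -/
def U1 : Matrix (Fin 2) (Fin 2) A := !![1, 0; qv 0, 0]

/-- The coefficient at `λ^m` (`m ∈ ℤ`) of the Laurent-polynomial matrix `V_{α,p}(λ)`,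
where `V_{-,p}(λ) = (λ^{-p}R_-(λ))_{≤0} - ((a_{-,p}, b_{-,p}), (0,0))` and
`V_{+,p}(λ) = (λ^{p}R_+(λ))_{≥0} - ((0,0), (c_{+,p}, -a_{+,p}))`. -/
def Vc (Rm Rp : M2) (α : Bool) (p : ℕ) (m : ℤ) : Matrix (Fin 2) (Fin 2) A :=
  if α then
    (if 0 ≤ m ∧ m ≤ (p : ℤ) then coefM Rp ((p : ℤ) - m).toNat else 0)
      - (if m = 0 then !![0, 0; cC Rm Rp true p, - aC Rm Rp true p] else 0)
  else
    (if -(p : ℤ) ≤ m ∧ m ≤ 0 then coefM Rm (m + (p : ℤ)).toNat else 0)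
      - (if m = 0 then !![aC Rm Rp false p, bC Rm Rp false p; 0, 0] else 0)

/-- The coefficient at `λ^m` (`m ∈ ℤ`) of `D(U(λ))`, where `D(λ) = 0`, i.e. of
`((0, D r_n), (λ·D q_n, 0))`. -/
def DUcoef (D : Derivation ℚ A A) (m : ℤ) : Matrix (Fin 2) (Fin 2) A :=
  if m = 0 then !![0, D (rv 0); 0, 0]
  else if m = 1 then !![0, 0; D (qv 0), 0] else 0

/-- The equation `D(U(λ)) = Λ(V_{α,p}(λ))·U(λ) - U(λ)·V_{α,p}(λ)`, written coefficientwise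
in powers of `λ` (both sides are Laurent polynomials in `λ` with matrix coefficients). -/
def DUeq (Rm Rp : M2) (α : Bool) (p : ℕ) (D : Derivation ℚ A A) : Prop :=
  ∀ m : ℤ,
    DUcoef D m =
      (Vc Rm Rp α p m).map Lam * U0 + (Vc Rm Rp α p (m - 1)).map Lam * U1
        - U0 * Vc Rm Rp α p m - U1 * Vc Rm Rp α p (m - 1)

/-- `D` commutes with the shift `Λ`. -/
def CommutesLam (D : Derivation ℚ A A) : Prop := ∀ f : A, D (Lam f) = Lam (D f)

/-- The action of `D_{α,p}` on the generators `r_n`, `q_n`. -/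
def GenEqs (Rm Rp : M2) (α : Bool) (p : ℕ) (D : Derivation ℚ A A) : Prop :=
  if α then
    D (rv 0) = rv 0 * Lam (aC Rm Rp true p) + Lam (bC Rm Rp true p)
        + (if p = 0 then rv 0 else 0) ∧
    D (qv 0) = qv 0 * Lam (aC Rm Rp true p) - Lam (cC Rm Rp true p)
  else
    D (rv 0) = -(rv 0 * Lam (aC Rm Rp false p)) - Lam (bC Rm Rp false p) ∧
    D (qv 0) = -(qv 0 * Lam (aC Rm Rp false p)) + Lam (cC Rm Rp false p)
        + (if p = 0 then qv 0 else 0)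

/-- `D` is the Ablowitz–Ladik derivation `D_{α,p}`: the unique derivation of `𝒜`
commuting with `Λ` and acting on the generators by the prescribed formulas. -/
def IsALDeriv (Rm Rp : M2) (α : Bool) (p : ℕ) (D : Derivation ℚ A A) : Prop :=
  CommutesLam D ∧ GenEqs Rm Rp α p D

/-- The coefficient at `λ^m` (`m ∈ ℤ`) of `R_α(λ)`: `R_-(λ)` has only nonnegative powers,
`R_+(λ)` only nonpositive ones. -/
def RExt (Rm Rp : M2) (α : Bool) (m : ℤ) : Matrix (Fin 2) (Fin 2) A :=
  if α then (if m ≤ 0 then coefM Rp (-m).toNat else 0)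
  else (if 0 ≤ m then coefM Rm m.toNat else 0)

/-- Extension of a double sequence by zero to integer indices. -/
def OmExt (Om : ℕ → ℕ → A) (m k : ℤ) : A :=
  if 0 ≤ m ∧ 0 ≤ k then Om m.toNat k.toNat else 0

/-- The generating identity `tr(R_+(λ)R_+(μ)) - 1 = (λ-μ)² Σ_{p,q≥0} Ω_{p,q} λ^{-p-1} μ^{-q-1}`,
written coefficientwise: `m, k` are the exponents of `λ⁻¹, μ⁻¹`. -/
def GenPP (Rp : M2) (Om : ℕ → ℕ → A) : Prop :=
  ∀ m k : ℤ,
    (if 0 ≤ m ∧ 0 ≤ k then (coefM Rp m.toNat * coefM Rp k.toNat).trace else 0)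
      - (if m = 0 ∧ k = 0 then 1 else 0)
    = OmExt Om (m + 1) (k - 1) - 2 * OmExt Om m k + OmExt Om (m - 1) (k + 1)

/-- The generating identity `tr(R_-(λ)R_-(μ)) - 1 = (λ-μ)² Σ_{p,q≥0} Ω_{p,q} λ^{p-1} μ^{q-1}`,
written coefficientwise: `m, k` are the exponents of `λ, μ`. -/
def GenMM (Rm : M2) (Om : ℕ → ℕ → A) : Prop :=
  ∀ m k : ℤ,
    (if 0 ≤ m ∧ 0 ≤ k then (coefM Rm m.toNat * coefM Rm k.toNat).trace else 0)
      - (if m = 0 ∧ k = 0 then 1 else 0)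
    = OmExt Om (m - 1) (k + 1) - 2 * OmExt Om m k + OmExt Om (m + 1) (k - 1)

/-- The generating identity
`Σ_{p,q≥0} Ω_{p,q} λ^{-p-1} μ^{q-1} = -tr(R_+(λ)R_-(μ))·Σ_{m≥1} m μ^{m-1} λ^{-m-1} + λ^{-2}`
(the expansion of `-tr(R_+(λ)R_-(μ))/(λ-μ)² + 1/λ²` for `|λ| > |μ|`), together with the
vanishing `Ω_{0,q} = Ω_{p,0} = 0`; `a` is the exponent of `λ⁻¹` and `b` the one of `μ`. -/
def GenPM (Rm Rp : M2) (Om : ℕ → ℕ → A) : Prop :=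
  (∀ q, Om 0 q = 0) ∧ (∀ p, Om p 0 = 0) ∧
  ∀ a b : ℤ,
    OmExt Om (a - 1) (b + 1)
      = -(∑ m ∈ Finset.Icc (1 : ℤ) (min (a - 1) (b + 1)),
            m • (coefM Rp (a - m - 1).toNat * coefM Rm (b - m + 1).toNat).trace)
        + (if a = 2 ∧ b = 0 then 1 else 0)

/-- The generating identity
`Σ_{p,q≥0} Ω_{q,p} λ^{p-1} μ^{-q-1} = -tr(R_-(λ)R_+(μ))·Σ_{m≥1} m λ^{m-1} μ^{-m-1} + μ^{-2}`
(the expansion of `-tr(R_-(λ)R_+(μ))/(λ-μ)² + 1/μ²` for `|μ| > |λ|`);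
`c` is the exponent of `λ` and `d` the one of `μ⁻¹`. -/
def GenMP (Rm Rp : M2) (Om : ℕ → ℕ → A) : Prop :=
  ∀ c d : ℤ,
    OmExt Om (d - 1) (c + 1)
      = -(∑ m ∈ Finset.Icc (1 : ℤ) (min (c + 1) (d - 1)),
            m • (coefM Rm (c - m + 1).toNat * coefM Rp (d - m - 1).toNat).trace)
        + (if c = 0 ∧ d = 2 then 1 else 0)

/-- `Om α β p q` is the full tau-structure family `Ω_{α,p;β,q}`
(with `α = + ↔ true`), as defined by the four generating identities,
where `Ω_{-,p;+,q} := Ω_{+,q;-,p}`. -/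
def OmFam (Rm Rp : M2) (Om : Bool → Bool → ℕ → ℕ → A) : Prop :=
  GenPP Rp (Om true true) ∧ GenMM Rm (Om false false) ∧ GenPM Rm Rp (Om true false) ∧
  ∀ p q, Om false true p q = Om true false q p

/-- The multipoint quantities `Ω_{α_1,p_1;…;α_m,p_m}` (`m = k + 2` points), defined
inductively from the two-point family by applying the derivations `D_{α,p}`. -/
def OmK (Om : Bool → Bool → ℕ → ℕ → A) (D : Bool → ℕ → Derivation ℚ A A) :
    (k : ℕ) → (Fin (k + 2) → Bool) → (Fin (k + 2) → ℕ) → A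
  | 0, β, i => Om (β 0) (β 1) (i 0) (i 1)
  | k + 1, β, i =>
      D (β (Fin.last (k + 2))) (i (Fin.last (k + 2)))
        (OmK Om D k (fun j => β j.castSucc) (fun j => i j.castSucc))

/-- Multiplication of a formal series in `λ_1, …, λ_n` with exponents in `ℤⁿ`
(given by its coefficient function `F`) by a polynomial `P`, coefficientwise. -/
def mulPoly {n : ℕ} (P : MvPolynomial (Fin n) A) (F : (Fin n → ℤ) → A)
    (m : Fin n → ℤ) : A :=
  ∑ d ∈ P.support, P.coeff d * F (fun j => m j - d j)

/-- The Vandermonde-type polynomial `∏_{i<j} (λ_i - λ_j)`. -/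
def vandP (n : ℕ) : MvPolynomial (Fin n) A :=
  ∏ p ∈ Finset.univ.filter (fun p : Fin n × Fin n => p.1 < p.2),
    (MvPolynomial.X p.1 - MvPolynomial.X p.2)

/-- `i` and `j` are cyclically adjacent for `σ`, i.e. `{i,j} = {σ(t), σ(t+1)}` for some `t`. -/
def cycAdj {n : ℕ} [NeZero n] (σ : Equiv.Perm (Fin n)) (i j : Fin n) : Prop :=
  ∃ t : Fin n, (σ t = i ∧ σ (t + 1) = j) ∨ (σ t = j ∧ σ (t + 1) = i)

/-- The polynomial `∏_{i<j} (λ_i - λ_j) / ∏_t (λ_{σ(t)} - λ_{σ(t+1)})`, up to the sign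
`permSign σ`: the product of `(λ_i - λ_j)` over ordered non-cyclically-adjacent pairs. -/
def Qpoly {n : ℕ} [NeZero n] (σ : Equiv.Perm (Fin n)) : MvPolynomial (Fin n) A :=
  ∏ p ∈ Finset.univ.filter
      (fun p : Fin n × Fin n => p.1 < p.2 ∧ ¬ cycAdj σ p.1 p.2),
    (MvPolynomial.X p.1 - MvPolynomial.X p.2)

/-- The sign relating `∏_t (λ_{σ(t)} - λ_{σ(t+1)})` with the corresponding product over
ordered pairs. -/
def permSign {n : ℕ} [NeZero n] (σ : Equiv.Perm (Fin n)) : A :=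
  ∏ t : Fin n, (if σ (t + 1) < σ t then (-1 : A) else 1)

/-- The coefficient function of `tr(R_{α_{σ(1)}}(λ_{σ(1)}) ⋯ R_{α_{σ(n)}}(λ_{σ(n)}))`. -/
def Gfun (Rm Rp : M2) {n : ℕ} (β : Fin n → Bool) (σ : Equiv.Perm (Fin n))
    (m : Fin n → ℤ) : A :=
  (List.ofFn (fun j : Fin n => RExt Rm Rp (β (σ j)) (m (σ j)))).prod.trace

/-- The coefficient function of the generating series
`Σ_{i_1,…,i_m ≥ 0} Ω_{α_1,i_1;…;α_m,i_m} / (λ_1^{α_1 i_1 + 1} ⋯ λ_m^{α_m i_m + 1})`. -/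
def lhsF (Om : Bool → Bool → ℕ → ℕ → A) (D : Bool → ℕ → Derivation ℚ A A)
    {k : ℕ} (β : Fin (k + 2) → Bool) (m : Fin (k + 2) → ℤ) : A :=
  if (∀ j, if β j then m j ≤ -1 else -1 ≤ m j) then
    OmK Om D k β (fun j => if β j then (-(m j) - 1).toNat else (m j + 1).toNat)
  else 0

namespace ResPlusAux

open Finset PowerSeries

/-- Inverse shift. -/
def iLam : A →+* A :=
  (MvPolynomial.rename (fun bi : Bool × ℤ => (bi.1, bi.2 - 1))).toRingHom

lemma Lam_iLam (x : A) : Lam (iLam x) = x := by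
  show (MvPolynomial.rename _) ((MvPolynomial.rename _) x) = x
  rw [MvPolynomial.rename_rename]
  have : ((fun bi : Bool × ℤ => (bi.1, bi.2 + 1)) ∘ fun bi : Bool × ℤ => (bi.1, bi.2 - 1)) = id := by
    funext bi; simp
  rw [this, MvPolynomial.rename_id, AlgHom.id_apply]

lemma iLam_Lam (x : A) : iLam (Lam x) = x := by
  show (MvPolynomial.rename _) ((MvPolynomial.rename _) x) = x
  rw [MvPolynomial.rename_rename]
  have : ((fun bi : Bool × ℤ => (bi.1, bi.2 - 1)) ∘ fun bi : Bool × ℤ => (bi.1, bi.2 + 1)) = id := by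
    funext bi; simp
  rw [this, MvPolynomial.rename_id, AlgHom.id_apply]

lemma Lam_injective : Function.Injective (Lam : A → A) :=
  Function.LeftInverse.injective iLam_Lam

lemma Lam_qv (i : ℤ) : Lam (qv i) = qv (i + 1) := by
  show (MvPolynomial.rename _) (MvPolynomial.X _) = _
  rw [MvPolynomial.rename_X]; rfl

lemma Lam_rv (i : ℤ) : Lam (rv i) = rv (i + 1) := by
  show (MvPolynomial.rename _) (MvPolynomial.X _) = _
  rw [MvPolynomial.rename_X]; rfl

lemma Lam_qv_neg_one : Lam (qv (-1)) = qv 0 := by rw [Lam_qv]; norm_num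

lemma iLam_qv (i : ℤ) : iLam (qv i) = qv (i - 1) := by
  show (MvPolynomial.rename _) (MvPolynomial.X _) = _
  rw [MvPolynomial.rename_X]; rfl

/-- The recursion table: `gSeq p m` is the `m`-th coefficient triple `(a, b, c)`
provided `m ≤ p`. -/
noncomputable def gSeq : ℕ → ℕ → A × A × A
  | 0, _ => (1, 0, qv (-1))
  | (p+1), m =>
      if m ≤ p then gSeq p m
      else
        let fa : ℕ → A := fun i => (gSeq p i).1
        let fb : ℕ → A := fun i => (gSeq p i).2.1
        let fc : ℕ → A := fun i => (gSeq p i).2.2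
        let bn : A := rv 0 * Lam (fa p) + Lam (fb p)
            - rv 0 * ((if p = 0 then 1 else 0) - fa p)
        let an : A := -(∑ i ∈ Finset.range p, fa (i+1) * fa (p - i))
            - bn * fc 0 - ∑ i ∈ Finset.range p, fb (i+1) * fc (p - i)
        (an, bn, iLam (qv 0 * an + fc p) + qv (-1) * an)

noncomputable def co (p : ℕ) : A × A × A := gSeq p p

lemma gSeq_stable : ∀ p m, m ≤ p → gSeq p m = co m := by
  intro p
  induction p with
  | zero => intro m hm; interval_cases m; rfl
  | succ p ih =>
      intro m hm
      rcases Nat.lt_or_ge m (p+1) with h | h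
      · have hm' : m ≤ p := Nat.lt_succ_iff.mp h
        show gSeq (p+1) m = co m
        rw [show gSeq (p+1) m = gSeq p m by rw [gSeq]; simp [hm']]
        exact ih m hm'
      · have : m = p + 1 := le_antisymm hm h
        subst this; rfl

noncomputable def aF (p : ℕ) : A := (co p).1
noncomputable def bF (p : ℕ) : A := (co p).2.1
noncomputable def cF (p : ℕ) : A := (co p).2.2
noncomputable def dF (p : ℕ) : A := (if p = 0 then 1 else 0) - aF p

lemma aF_zero : aF 0 = 1 := rfl
lemma bF_zero : bF 0 = 0 := rfl
lemma cF_zero : cF 0 = qv (-1) := rfl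
lemma dF_zero : dF 0 = 0 := by simp [dF, aF_zero]

lemma co_succ (p : ℕ) :
    co (p+1) =
      (let bn : A := rv 0 * Lam (aF p) + Lam (bF p) - rv 0 * dF p
       let an : A := -(∑ i ∈ Finset.range p, aF (i+1) * aF (p - i))
          - bn * cF 0 - ∑ i ∈ Finset.range p, bF (i+1) * cF (p - i)
       (an, bn, iLam (qv 0 * an + cF p) + qv (-1) * an)) := by
  show gSeq (p+1) (p+1) = _
  rw [gSeq]
  rw [if_neg (by omega : ¬ p + 1 ≤ p)]
  have e1 : ∑ x ∈ Finset.range p, (gSeq p (x+1)).1 * (gSeq p (p-x)).1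
      = ∑ i ∈ Finset.range p, aF (i+1) * aF (p-i) :=
    Finset.sum_congr rfl fun i hi => by
      rw [gSeq_stable p (i+1) (Finset.mem_range.mp hi), gSeq_stable p (p-i) (Nat.sub_le p i)]; rfl
  have e2 : ∑ x ∈ Finset.range p, (gSeq p (x+1)).2.1 * (gSeq p (p-x)).2.2
      = ∑ i ∈ Finset.range p, bF (i+1) * cF (p-i) :=
    Finset.sum_congr rfl fun i hi => by
      rw [gSeq_stable p (i+1) (Finset.mem_range.mp hi), gSeq_stable p (p-i) (Nat.sub_le p i)]; rfl
  simp only [e1, e2, gSeq_stable p p le_rfl, gSeq_stable p 0 (Nat.zero_le p)]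
  rfl

end ResPlusAux

namespace ResPlusAux
open Finset PowerSeries

lemma bF_succ (p : ℕ) :
    bF (p+1) = rv 0 * Lam (aF p) + Lam (bF p) - rv 0 * dF p := by
  show (co (p+1)).2.1 = _
  rw [co_succ]

lemma aF_succ (p : ℕ) :
    aF (p+1) = -(∑ i ∈ Finset.range p, aF (i+1) * aF (p - i))
      - bF (p+1) * cF 0 - ∑ i ∈ Finset.range p, bF (i+1) * cF (p - i) := by
  rw [bF_succ]
  show (co (p+1)).1 = _
  rw [co_succ]

lemma cF_succ (p : ℕ) :
    cF (p+1) = iLam (qv 0 * aF (p+1) + cF p) + qv (-1) * aF (p+1) := by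
  have h : aF (p+1) = (co (p+1)).1 := rfl
  rw [h]
  show (co (p+1)).2.2 = _
  rw [co_succ]

lemma antid_split (F : ℕ → ℕ → A) (p : ℕ) :
    ∑ x ∈ Finset.HasAntidiagonal.antidiagonal (p+1), F x.1 x.2
      = F 0 (p+1) + (∑ i ∈ Finset.range p, F (i+1) (p-i)) + F (p+1) 0 := by
  rw [Finset.Nat.sum_antidiagonal_eq_sum_range_succ_mk]
  rw [Finset.sum_range_succ, Finset.sum_range_succ']
  simp only [Nat.succ_sub_succ, Nat.sub_zero, Nat.sub_self]
  ring

lemma L2 (p : ℕ) :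
    aF p = (∑ x ∈ Finset.HasAntidiagonal.antidiagonal p, aF x.1 * aF x.2)
      + ∑ x ∈ Finset.HasAntidiagonal.antidiagonal p, bF x.1 * cF x.2 := by
  cases p with
  | zero => simp [aF_zero, bF_zero]
  | succ p =>
      rw [antid_split (fun i j => aF i * aF j), antid_split (fun i j => bF i * cF j)]
      simp only [aF_zero, bF_zero]
      rw [aF_succ]
      ring

/-- The resolvent coefficients as power series. -/
noncomputable def aP : S := PowerSeries.mk aF
noncomputable def bP : S := PowerSeries.mk bF
noncomputable def cP : S := PowerSeries.mk cF
noncomputable def dP : S := 1 - aP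

lemma coeff_dP (p : ℕ) : (PowerSeries.coeff (R := A) p) dP = dF p := by
  simp [dP, dF, aP, PowerSeries.coeff_one]

lemma hbP : bP = PowerSeries.X *
    (PowerSeries.C (R := A) (rv 0) * LamS aP + LamS bP - PowerSeries.C (R := A) (rv 0) * dP) := by
  ext p
  cases p with
  | zero =>
      simp [bP, bF_zero, PowerSeries.coeff_zero_eq_constantCoeff]
  | succ p =>
      rw [PowerSeries.coeff_succ_X_mul]
      simp only [map_add, map_sub, bP, PowerSeries.coeff_mk, LamS, PowerSeries.coeff_map,
        PowerSeries.coeff_C_mul, coeff_dP, aP]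
      rw [bF_succ]

lemma hdet0 : aP - aP * aP - bP * cP = 0 := by
  ext p
  simp only [map_sub, PowerSeries.coeff_mul, aP, bP, cP, PowerSeries.coeff_mk, map_zero]
  have := L2 p
  rw [this]; ring

lemma hdetP : aP * dP - bP * cP = 0 := by
  have : aP * dP - bP * cP = aP - aP * aP - bP * cP := by rw [dP]; ring
  rw [this, hdet0]

lemma hcP : LamS cP + PowerSeries.C (R := A) (qv 0) * LamS dP
    = PowerSeries.C (R := A) (qv 0) * aP + PowerSeries.X * cP := by
  ext p : 1
  cases p with
  | zero =>
      simp only [map_add, LamS, PowerSeries.coeff_map, PowerSeries.coeff_C_mul,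
        PowerSeries.coeff_zero_eq_constantCoeff]
      simp [cP, aP, dP, cF_zero, aF_zero, Lam_qv_neg_one]
  | succ p =>
      rw [map_add, map_add, PowerSeries.coeff_succ_X_mul]
      simp only [LamS, PowerSeries.coeff_map, PowerSeries.coeff_C_mul, coeff_dP,
        cP, aP, PowerSeries.coeff_mk]
      rw [cF_succ]
      have hd : dF (p+1) = -aF (p+1) := by simp [dF]
      rw [hd, map_add Lam, Lam_iLam, map_mul Lam, Lam_qv_neg_one, map_neg]
      ring

end ResPlusAux

namespace ResPlusAux
open Finset PowerSeries

lemma LamS_dP : LamS dP = 1 - LamS aP := by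
  rw [dP, map_sub, map_one]

lemma h2s : PowerSeries.X * PowerSeries.C (R := A) (rv 0) * LamS aP + PowerSeries.X * LamS bP
    = bP + PowerSeries.X * PowerSeries.C (R := A) (rv 0) * (1 - aP) := by
  have h := hbP
  rw [dP] at h
  linear_combination -h

lemma h3s : LamS cP + PowerSeries.C (R := A) (qv 0) * (1 - LamS aP)
    = PowerSeries.C (R := A) (qv 0) * aP + PowerSeries.X * cP := by
  have h := hcP
  rw [LamS_dP] at h
  linear_combination h

lemma hds : aP * (1 - aP) - bP * cP = 0 := by
  have h := hdetP
  rw [dP] at h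
  linear_combination h

lemma hdsL : LamS aP * (1 - LamS aP) - LamS bP * LamS cP = 0 := by
  have := congrArg (⇑LamS) hds
  simpa [map_sub, map_mul, map_one] using this

lemma constantCoeff_aP : PowerSeries.constantCoeff (R := A) aP = 1 := by
  rw [← PowerSeries.coeff_zero_eq_constantCoeff]
  simpa [aP] using aF_zero

lemma constantCoeff_bP : PowerSeries.constantCoeff (R := A) bP = 0 := by
  rw [← PowerSeries.coeff_zero_eq_constantCoeff]
  simpa [bP] using bF_zero

lemma constantCoeff_cP : PowerSeries.constantCoeff (R := A) cP = qv (-1) := by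
  rw [← PowerSeries.coeff_zero_eq_constantCoeff]
  simpa [cP] using cF_zero

lemma constantCoeff_dP : PowerSeries.constantCoeff (R := A) dP = 0 := by
  simp [dP, constantCoeff_aP]

lemma constantCoeff_LamS (f : S) :
    PowerSeries.constantCoeff (R := A) (LamS f) = Lam (PowerSeries.constantCoeff (R := A) f) := by
  rw [← PowerSeries.coeff_zero_eq_constantCoeff, LamS, PowerSeries.coeff_map,
    PowerSeries.coeff_zero_eq_constantCoeff]

lemma he1 : LamS aP + PowerSeries.C (R := A) (qv 0) * LamS bP
    = aP + PowerSeries.X * PowerSeries.C (R := A) (rv 0) * cP := by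
  set u : S := 1 - LamS aP - aP with hu
  have hcu : PowerSeries.constantCoeff (R := A) u = -1 := by
    simp [hu, constantCoeff_LamS, constantCoeff_aP]
  have hune : u ≠ 0 := by
    intro h
    rw [h, map_zero] at hcu
    exact (neg_ne_zero.mpr (one_ne_zero : (1:A) ≠ 0)) hcu.symm
  have key : u * (LamS aP + PowerSeries.C (R := A) (qv 0) * LamS bP
      - aP - PowerSeries.X * PowerSeries.C (R := A) (rv 0) * cP) = 0 := by
    rw [hu]
    linear_combination cP * h2s + (LamS bP) * h3s + hdsL - hds
  rcases mul_eq_zero.mp key with h | h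
  · exact absurd h hune
  · linear_combination h

lemma he4 : PowerSeries.X * PowerSeries.C (R := A) (rv 0) * LamS cP + PowerSeries.X * LamS dP
    = PowerSeries.C (R := A) (qv 0) * bP + PowerSeries.X * dP := by
  rw [LamS_dP, dP]
  set u : S := LamS aP + aP - 1 with hu
  have hcu : PowerSeries.constantCoeff (R := A) u = 1 := by
    simp [hu, constantCoeff_LamS, constantCoeff_aP]
  have hune : u ≠ 0 := by
    intro h
    rw [h, map_zero] at hcu
    exact one_ne_zero hcu.symm
  have key : u * (PowerSeries.X * PowerSeries.C (R := A) (rv 0) * LamS cP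
      + PowerSeries.X * (1 - LamS aP)
      - PowerSeries.C (R := A) (qv 0) * bP - PowerSeries.X * (1 - aP)) = 0 := by
    rw [hu]
    linear_combination (LamS cP) * h2s + bP * h3s
      + PowerSeries.X * hdsL - PowerSeries.X * hds
  rcases mul_eq_zero.mp key with h | h
  · exact absurd h hune
  · linear_combination h

/-- The basic resolvent at infinity. -/
noncomputable def Rsol : M2 := !![aP, bP; cP, dP]

lemma Rsol_apply00 : Rsol 0 0 = aP := rfl
lemma Rsol_apply01 : Rsol 0 1 = bP := rfl
lemma Rsol_apply10 : Rsol 1 0 = cP := rfl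
lemma Rsol_apply11 : Rsol 1 1 = dP := rfl

lemma Rsol_isResPlus : IsResPlus Rsol := by
  refine ⟨?_, ?_, ?_, ?_⟩
  · refine Matrix.ext fun i j => ?_
    fin_cases i <;> fin_cases j <;>
      simp [Rsol, UmatInf, Matrix.mul_apply, Fin.sum_univ_two, Matrix.map_apply]
    · linear_combination he1
    · linear_combination -hbP
    · linear_combination hcP
    · linear_combination he4
  · refine Matrix.ext fun i j => ?_
    fin_cases i <;> fin_cases j <;>
      simp [Rsol, Matrix.map_apply, constantCoeff_aP, constantCoeff_bP,
        constantCoeff_cP, constantCoeff_dP]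
  · show aP + dP = 1
    rw [dP]; ring
  · show aP * dP - bP * cP = 0
    exact hdetP

end ResPlusAux

namespace ResPlusAux
open Finset PowerSeries

lemma uniq (R : M2) (hR : IsResPlus R) : R = Rsol := by
  obtain ⟨hmat, hcst, htr, hdt⟩ := hR
  have e01 : (R.map ⇑LamS * UmatInf) 0 1 = (UmatInf * R) 0 1 := by rw [hmat]
  have e10 : (R.map ⇑LamS * UmatInf) 1 0 = (UmatInf * R) 1 0 := by rw [hmat]
  simp [UmatInf, Matrix.mul_apply, Fin.sum_univ_two, Matrix.map_apply] at e01 e10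
  set a : S := R 0 0 with ha0
  set b : S := R 0 1 with hb0
  set c : S := R 1 0 with hc0
  set d : S := R 1 1 with hd0
  -- constant coefficients
  have k00 : PowerSeries.constantCoeff (R := A) a = 1 := by
    have : (R.map ⇑(PowerSeries.constantCoeff (R := A))) 0 0 = (1 : A) := by rw [hcst]; rfl
    simpa [Matrix.map_apply, ha0] using this
  have k01 : PowerSeries.constantCoeff (R := A) b = 0 := by
    have : (R.map ⇑(PowerSeries.constantCoeff (R := A))) 0 1 = (0 : A) := by rw [hcst]; rfl
    simpa [Matrix.map_apply, hb0] using this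
  have k10 : PowerSeries.constantCoeff (R := A) c = qv (-1) := by
    have : (R.map ⇑(PowerSeries.constantCoeff (R := A))) 1 0 = qv (-1) := by rw [hcst]; rfl
    simpa [Matrix.map_apply, hc0] using this
  have hd1 : d = 1 - a := by linear_combination htr
  -- series forms
  have hbR : b = PowerSeries.X *
      (PowerSeries.C (R := A) (rv 0) * LamS a + LamS b - PowerSeries.C (R := A) (rv 0) * d) := by
    linear_combination -e01
  have hdetR : a - a * a - b * c = 0 := by linear_combination hdt - a * hd1
  -- coefficient recursions for R
  have cb : ∀ p : ℕ, PowerSeries.coeff (R := A) (p+1) b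
      = rv 0 * Lam (PowerSeries.coeff (R := A) p a) + Lam (PowerSeries.coeff (R := A) p b)
        - rv 0 * PowerSeries.coeff (R := A) p d := by
    intro p
    conv_lhs => rw [hbR]
    rw [PowerSeries.coeff_succ_X_mul]
    simp [LamS, PowerSeries.coeff_map]
  have cdd : ∀ p : ℕ, PowerSeries.coeff (R := A) p d
      = (if p = 0 then 1 else 0) - PowerSeries.coeff (R := A) p a := by
    intro p
    rw [hd1, map_sub, PowerSeries.coeff_one]
  -- main induction
  have key : ∀ p : ℕ, PowerSeries.coeff (R := A) p a = aF p ∧ PowerSeries.coeff (R := A) p b = bF p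
      ∧ PowerSeries.coeff (R := A) p c = cF p := by
    intro p
    induction p using Nat.strong_induction_on with
    | _ p ih =>
      match p with
      | 0 =>
          refine ⟨?_, ?_, ?_⟩
          · rw [PowerSeries.coeff_zero_eq_constantCoeff, k00, aF_zero]
          · rw [PowerSeries.coeff_zero_eq_constantCoeff, k01, bF_zero]
          · rw [PowerSeries.coeff_zero_eq_constantCoeff, k10, cF_zero]
      | p + 1 =>
          -- step for b
          have hb : PowerSeries.coeff (R := A) (p+1) b = bF (p+1) := by
            rw [cb p, (ih p (by omega)).1, (ih p (by omega)).2.1, cdd p,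
              (ih p (by omega)).1, bF_succ p, dF]
          -- step for a
          have hmidA : ∑ i ∈ Finset.range p,
              PowerSeries.coeff (R := A) (i+1) a * PowerSeries.coeff (R := A) (p-i) a
              = ∑ i ∈ Finset.range p, aF (i+1) * aF (p-i) :=
            Finset.sum_congr rfl fun i hi => by
              rw [(ih (i+1) (by have := Finset.mem_range.mp hi; omega)).1,
                (ih (p-i) (by have := Nat.sub_le p i; omega)).1]
          have hmidB : ∑ i ∈ Finset.range p,
              PowerSeries.coeff (R := A) (i+1) b * PowerSeries.coeff (R := A) (p-i) c
              = ∑ i ∈ Finset.range p, bF (i+1) * cF (p-i) :=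
            Finset.sum_congr rfl fun i hi => by
              rw [(ih (i+1) (by have := Finset.mem_range.mp hi; omega)).2.1,
                (ih (p-i) (by have := Nat.sub_le p i; omega)).2.2]
          have hA : PowerSeries.coeff (R := A) (p+1) a
              = (∑ x ∈ Finset.HasAntidiagonal.antidiagonal (p+1),
                  PowerSeries.coeff (R := A) x.1 a * PowerSeries.coeff (R := A) x.2 a)
                + ∑ x ∈ Finset.HasAntidiagonal.antidiagonal (p+1),
                  PowerSeries.coeff (R := A) x.1 b * PowerSeries.coeff (R := A) x.2 c := by
            have := congrArg (PowerSeries.coeff (R := A) (p+1)) hdetR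
            simp only [map_sub, PowerSeries.coeff_mul, map_zero] at this
            linear_combination this
          rw [antid_split (fun i j => PowerSeries.coeff (R := A) i a * PowerSeries.coeff (R := A) j a),
            antid_split (fun i j => PowerSeries.coeff (R := A) i b * PowerSeries.coeff (R := A) j c)]
            at hA
          simp only [PowerSeries.coeff_zero_eq_constantCoeff, k00, k01] at hA
          rw [hmidA, hmidB, hb] at hA
          have hL := L2 (p+1)
          rw [antid_split (fun i j => aF i * aF j),
            antid_split (fun i j => bF i * cF j), aF_zero, bF_zero] at hL
          have hAa : PowerSeries.coeff (R := A) (p+1) a = aF (p+1) := by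
            rw [k10] at hA
            rw [cF_zero] at hL
            linear_combination hL - hA
          refine ⟨hAa, hb, ?_⟩
          -- step for c
          have e10c := congrArg (PowerSeries.coeff (R := A) (p+1)) e10
          simp only [map_add, PowerSeries.coeff_succ_X_mul, LamS,
            PowerSeries.coeff_map, PowerSeries.coeff_C_mul,
            PowerSeries.coeff_mul_C] at e10c
          have hdp : PowerSeries.coeff (R := A) (p+1) d = -aF (p+1) := by
            rw [cdd (p+1), hAa]; simp
          have hcp : PowerSeries.coeff (R := A) p c = cF p := (ih p (by omega)).2.2
          rw [hdp, hAa, hcp, map_neg] at e10c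
          apply Lam_injective
          rw [cF_succ, map_add Lam, Lam_iLam, map_mul Lam, Lam_qv_neg_one]
          linear_combination e10c
  -- conclude
  have hav : a = aP := PowerSeries.ext fun p => by
    cases p with
    | zero => simpa [aP] using (key 0).1
    | succ p => simpa [aP] using (key (p+1)).1
  have hbv : b = bP := PowerSeries.ext fun p => by
    cases p with
    | zero => simpa [bP] using (key 0).2.1
    | succ p => simpa [bP] using (key (p+1)).2.1
  have hcv : c = cP := PowerSeries.ext fun p => by
    cases p with
    | zero => simpa [cP] using (key 0).2.2
    | succ p => simpa [cP] using (key (p+1)).2.2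
  have hdv : d = dP := by rw [hd1, hav, dP]
  rw [Matrix.eta_fin_two R, ← ha0, ← hb0, ← hc0, ← hd0, hav, hbv, hcv, hdv]
  rfl

end ResPlusAux

/-- Existence and uniqueness of the basic matrix resolvent `R_+(λ)` at `λ = ∞`. -/
theorem exists_unique_basic_resolvent_plus : ∃! R : M2, IsResPlus R := by
  exact ⟨ResPlusAux.Rsol, ResPlusAux.Rsol_isResPlus, ResPlusAux.uniq⟩
end
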